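/- Let $X$ and $Y$ be random vectors in $\mathbb{R}^n$ defined on a common probability space with $\|X - Y\| \le B$ almost surely, and let $N \sim \mathcal{N}(0, \sigma^2 I_n)$ be independent of $(X, Y)$. Then the total variation distance between the laws of $X + N$ and $Y + N$ satisfies $\mathrm{TV}(X + N, Y + N) \le (1 - 2Q(B/(2\sigma)))\, \mathbb{P}(X \ne Y)$, where $Q(a) = \mathbb{P}(Z \ge a)$ for standard normal $Z$. -/

import Mathlib

open MeasureTheory

/-- Total variation distance between two measures. -/
noncomputable def tvDist {E : Type*} [MeasurableSpace E] (μ ν : Measure E) : ℝ :=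
  ⨆ A : {s : Set E // MeasurableSet s}, |(μ A.1).toReal - (ν A.1).toReal|

/-- The isotropic Gaussian measure `𝒩(x, σ² Iₙ)` on `ℝⁿ`, given by its density. -/
noncomputable def gaussianE (n : ℕ) (x : EuclideanSpace ℝ (Fin n)) (σ : ℝ) :
    Measure (EuclideanSpace ℝ (Fin n)) :=
  volume.withDensity fun z => ENNReal.ofReal
    ((2 * Real.pi * σ ^ 2) ^ (-(n : ℝ) / 2) * Real.exp (-‖z - x‖ ^ 2 / (2 * σ ^ 2)))

/-- The Gaussian tail probability `Q(a) = ℙ(Z ≥ a)`, `Z ∼ 𝒩(0,1)`. -/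
noncomputable def gaussQ (a : ℝ) : ℝ :=
  ((ProbabilityTheory.gaussianReal 0 1) (Set.Ici a)).toReal

open MeasureTheory ProbabilityTheory RealInnerProductSpace


section aux
variable {α β : Type*} [MeasurableSpace α] [MeasurableSpace β]

/-- transport a withDensity measure along a measure preserving equivalence -/
lemma map_withDensity_mp (e : α ≃ᵐ β) {μ : Measure α} {ν : Measure β}
    (h : MeasurePreserving e μ ν) {g : β → ENNReal} (hg : Measurable g) :
    Measure.map e (μ.withDensity (fun a => g (e a))) = ν.withDensity g := by
  ext s hs
  rw [Measure.map_apply e.measurable hs, withDensity_apply _ (e.measurable hs),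
    withDensity_apply _ hs, ← h.map_eq, setLIntegral_map hs hg e.measurable]

lemma map_eval_pi' {ι : Type*} [Fintype ι] {A : ι → Type*} [∀ i, MeasurableSpace (A i)]
    (μ : ∀ i, Measure (A i)) [∀ i, IsProbabilityMeasure (μ i)] (i : ι) :
    Measure.map (Function.eval i) (Measure.pi μ) = μ i := by
  classical
  ext s hs
  rw [Measure.map_apply (measurable_pi_apply i) hs]
  have : (Function.eval i ⁻¹' s : Set (∀ j, A j)) =
      Set.univ.pi (Function.update (fun _ => Set.univ) i s) := Set.eval_preimage
  rw [this, Measure.pi_pi]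
  rw [Finset.prod_eq_single i (fun j _ hj => by rw [Function.update_of_ne hj]; simp)
    (fun h => absurd (Finset.mem_univ i) h), Function.update_self]
end aux

section gauss
variable {n : ℕ} {σ : ℝ}

/-- the product of 1D gaussians as a density on the pi space -/
lemma pi_gaussianReal (V : NNReal) (hV : V ≠ 0) :
    (Measure.pi fun _ : Fin n => gaussianReal 0 V) =
      (volume : Measure (Fin n → ℝ)).withDensity
        (fun x => ENNReal.ofReal (∏ i, gaussianPDFReal 0 V (x i))) := by
  refine Measure.pi_eq fun s hs => ?_
  have hbox : MeasurableSet (Set.univ.pi s) := MeasurableSet.univ_pi hs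
  rw [withDensity_apply _ hbox]
  have hint : ∀ i, Integrable ((s i).indicator (gaussianPDFReal 0 V)) :=
    fun i => (integrable_gaussianPDFReal 0 V).indicator (hs i)
  have hprod : Integrable (fun x : Fin n → ℝ => ∏ i, (s i).indicator (gaussianPDFReal 0 V) (x i)) :=
    Integrable.fintype_prod hint
  have hindeq : (fun x : Fin n → ℝ => ∏ i, (s i).indicator (gaussianPDFReal 0 V) (x i)) =
      (Set.univ.pi s).indicator (fun x => ∏ i, gaussianPDFReal 0 V (x i)) := by
    funext x
    by_cases h : x ∈ Set.univ.pi s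
    · rw [Set.indicator_of_mem h]
      exact Finset.prod_congr rfl fun i _ =>
        Set.indicator_of_mem (h i (Set.mem_univ i)) _
    · rw [Set.indicator_of_notMem h]
      simp only [Set.mem_univ_pi, not_forall] at h
      obtain ⟨i, hi⟩ := h
      exact Finset.prod_eq_zero (Finset.mem_univ i) (Set.indicator_of_notMem hi _)
  have key : ENNReal.ofReal (∫ x : Fin n → ℝ, ∏ i, (s i).indicator (gaussianPDFReal 0 V) (x i)) =
      ∫⁻ x in Set.univ.pi s, ENNReal.ofReal (∏ i, gaussianPDFReal 0 V (x i)) := by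
    rw [ofReal_integral_eq_lintegral_ofReal hprod
      (Filter.Eventually.of_forall fun x => Finset.prod_nonneg fun i _ =>
        Set.indicator_nonneg (fun t _ => gaussianPDFReal_nonneg 0 V t) _)]
    rw [← lintegral_indicator hbox _]
    congr 1
    funext x
    by_cases h : x ∈ Set.univ.pi s
    · rw [Set.indicator_of_mem h]
      congr 1
      exact Finset.prod_congr rfl fun i _ => Set.indicator_of_mem (h i (Set.mem_univ i)) _
    · rw [Set.indicator_of_notMem h]
      simp only [Set.mem_univ_pi, not_forall] at h
      obtain ⟨i, hi⟩ := h
      rw [Finset.prod_eq_zero (Finset.mem_univ i) (Set.indicator_of_notMem hi _),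
        ENNReal.ofReal_zero]
  rw [← key, integral_fintype_prod_volume_eq_prod (f := fun i => (s i).indicator (gaussianPDFReal 0 V))]
  rw [ENNReal.ofReal_prod_of_nonneg fun i _ =>
    integral_nonneg (Set.indicator_nonneg (fun t _ => gaussianPDFReal_nonneg 0 V t))]
  exact Finset.prod_congr rfl fun i _ => by
    rw [gaussianReal_apply_eq_integral _ hV, integral_indicator (hs i)]
end gauss

section gaussE
open Real
variable {n : ℕ} {σ : ℝ}

lemma measurable_gdens (x : EuclideanSpace ℝ (Fin n)) :
    Measurable (fun z : EuclideanSpace ℝ (Fin n) => ENNReal.ofReal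
      ((2 * π * σ ^ 2) ^ (-(n : ℝ) / 2) * Real.exp (-‖z - x‖ ^ 2 / (2 * σ ^ 2)))) := by
  apply ENNReal.measurable_ofReal.comp
  apply Measurable.const_mul
  exact (Real.continuous_exp.comp
    (((continuous_norm.comp (continuous_id.sub continuous_const)).pow 2).neg.div_const _)).measurable

lemma gdens_prod (hσ : 0 < σ) (z : EuclideanSpace ℝ (Fin n)) :
    (2 * π * σ ^ 2) ^ (-(n : ℝ) / 2) * Real.exp (-‖z - 0‖ ^ 2 / (2 * σ ^ 2)) =
      ∏ i, gaussianPDFReal 0 ⟨σ ^ 2, sq_nonneg σ⟩ (z i) := by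
  have h2 : (0 : ℝ) < 2 * π * σ ^ 2 := by positivity
  have hc : (2 * π * σ ^ 2) ^ (-(n : ℝ) / 2) = ((√(2 * π * σ ^ 2))⁻¹) ^ n := by
    rw [Real.sqrt_eq_rpow, ← Real.rpow_neg_one ((2 * π * σ ^ 2) ^ ((1 : ℝ)/2)),
      ← Real.rpow_mul h2.le, ← Real.rpow_natCast ((2 * π * σ ^ 2) ^ ((1:ℝ)/2 * (-1 : ℝ))) n,
      ← Real.rpow_mul h2.le]
    congr 1
    push_cast
    ring
  have hz : ‖z‖ ^ 2 = ∑ i, (z i) ^ 2 := by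
    rw [EuclideanSpace.norm_eq, Real.sq_sqrt (Finset.sum_nonneg fun i _ => sq_nonneg _)]
    exact Finset.sum_congr rfl fun i _ => by rw [Real.norm_eq_abs, sq_abs]
  rw [sub_zero, hc, hz]
  have hR : ∀ i : Fin n, gaussianPDFReal 0 (⟨σ ^ 2, sq_nonneg σ⟩ : NNReal) (z i) =
      (√(2 * π * σ ^ 2))⁻¹ * rexp (-(z i) ^ 2 / (2 * σ ^ 2)) := fun i => by
    simp only [gaussianPDFReal, NNReal.coe_mk, sub_zero]
    rfl
  rw [Finset.prod_congr rfl fun i _ => hR i, Finset.prod_mul_distrib, Finset.prod_const, ← Real.exp_sum, Finset.card_univ,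
    Fintype.card_fin]
  congr 1
  rw [neg_div, Finset.sum_div, ← Finset.sum_neg_distrib]
  simp_rw [neg_div]

lemma gaussianE_eq_pi (hσ : 0 < σ) :
    gaussianE n 0 σ = Measure.map (MeasurableEquiv.toLp 2 (Fin n → ℝ))
      (Measure.pi fun _ : Fin n => gaussianReal 0 ⟨σ ^ 2, sq_nonneg σ⟩) := by
  have hV : (⟨σ ^ 2, sq_nonneg σ⟩ : NNReal) ≠ 0 := by
    simp only [ne_eq, ← NNReal.coe_eq_zero]
    exact ne_of_gt (pow_pos hσ 2)
  rw [pi_gaussianReal _ hV]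
  have := map_withDensity_mp (MeasurableEquiv.toLp 2 (Fin n → ℝ))
    (EuclideanSpace.volume_preserving_symm_measurableEquiv_toLp (Fin n)).symm
    (g := fun z : EuclideanSpace ℝ (Fin n) => ENNReal.ofReal
      ((2 * π * σ ^ 2) ^ (-(n : ℝ) / 2) * Real.exp (-‖z - 0‖ ^ 2 / (2 * σ ^ 2))))
    (measurable_gdens 0)
  have hfun : (fun a : Fin n → ℝ =>
      (fun z : EuclideanSpace ℝ (Fin n) => ENNReal.ofReal
        ((2 * π * σ ^ 2) ^ (-(n : ℝ) / 2) * Real.exp (-‖z - 0‖ ^ 2 / (2 * σ ^ 2))))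
        ((MeasurableEquiv.toLp 2 (Fin n → ℝ)) a)) =
      (fun x : Fin n → ℝ =>
        ENNReal.ofReal (∏ i, gaussianPDFReal 0 ⟨σ ^ 2, sq_nonneg σ⟩ (x i))) :=
    funext fun x => congrArg ENNReal.ofReal (gdens_prod hσ _)
  rw [gaussianE, ← this, hfun]
end gaussE

section gaussE2
open Real
variable {n : ℕ} {σ : ℝ}

lemma isProbabilityMeasure_gaussianE_zero (hσ : 0 < σ) :
    IsProbabilityMeasure (gaussianE n 0 σ) := by
  rw [gaussianE_eq_pi hσ]
  haveI : ∀ _ : Fin n, IsProbabilityMeasure (gaussianReal 0 (⟨σ ^ 2, sq_nonneg σ⟩ : NNReal)) :=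
    fun _ => instIsProbabilityMeasureGaussianReal 0 _
  exact Measure.isProbabilityMeasure_map (MeasurableEquiv.measurable _).aemeasurable

lemma gaussianE_translate (x : EuclideanSpace ℝ (Fin n)) :
    Measure.map (fun w => x + w) (gaussianE n 0 σ) = gaussianE n x σ := by
  have hmp : MeasurePreserving (fun w : EuclideanSpace ℝ (Fin n) => x + w) volume volume :=
    measurePreserving_add_left volume x
  have := map_withDensity_mp (Homeomorph.addLeft x).toMeasurableEquiv hmp
    (g := fun z : EuclideanSpace ℝ (Fin n) => ENNReal.ofReal
      ((2 * π * σ ^ 2) ^ (-(n : ℝ) / 2) * Real.exp (-‖z - x‖ ^ 2 / (2 * σ ^ 2))))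
    (measurable_gdens x)
  simp only [Homeomorph.toMeasurableEquiv_coe, Homeomorph.coe_addLeft,
    add_sub_cancel_left] at this
  rw [gaussianE, gaussianE]
  simp only [sub_zero]
  exact this

lemma isProbabilityMeasure_gaussianE (hσ : 0 < σ) (x : EuclideanSpace ℝ (Fin n)) :
    IsProbabilityMeasure (gaussianE n x σ) := by
  haveI := isProbabilityMeasure_gaussianE_zero (n := n) hσ
  rw [← gaussianE_translate x]
  exact Measure.isProbabilityMeasure_map (measurable_const_add x).aemeasurable

lemma gaussianE_map_isometry (f : EuclideanSpace ℝ (Fin n) ≃ₗᵢ[ℝ] EuclideanSpace ℝ (Fin n)) :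
    Measure.map f (gaussianE n 0 σ) = gaussianE n 0 σ := by
  have := map_withDensity_mp f.toHomeomorph.toMeasurableEquiv (f.measurePreserving)
    (g := fun z : EuclideanSpace ℝ (Fin n) => ENNReal.ofReal
      ((2 * π * σ ^ 2) ^ (-(n : ℝ) / 2) * Real.exp (-‖z - 0‖ ^ 2 / (2 * σ ^ 2))))
    (measurable_gdens 0)
  simp only [Homeomorph.toMeasurableEquiv_coe, LinearIsometryEquiv.coe_toHomeomorph, sub_zero,
    f.norm_map] at this
  rw [gaussianE]
  simp only [sub_zero]
  exact this

lemma gaussianE_map_inner (hσ : 0 < σ) (u : EuclideanSpace ℝ (Fin n)) (hu : ‖u‖ = 1) :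
    Measure.map (fun z : EuclideanSpace ℝ (Fin n) => ⟪u, z⟫)
      (gaussianE n 0 σ) = gaussianReal 0 ⟨σ ^ 2, sq_nonneg σ⟩ := by
  cases n with
  | zero =>
      exfalso
      have : u = 0 := Subsingleton.elim u 0
      rw [this, norm_zero] at hu
      exact one_ne_zero hu.symm
  | succ m =>
      set E₀ : EuclideanSpace ℝ (Fin (m + 1)) := EuclideanSpace.single 0 1 with hE₀
      have hE₀n : ‖E₀‖ = 1 := by rw [hE₀, EuclideanSpace.norm_single, norm_one]
      set R := Submodule.reflection (Submodule.span ℝ {u - E₀})ᗮ with hR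
      have hRu : R u = E₀ := Submodule.reflection_sub (hu.trans hE₀n.symm)
      have hcomp : (fun z : EuclideanSpace ℝ (Fin (m + 1)) => ⟪u, z⟫) =
          (fun w : EuclideanSpace ℝ (Fin (m + 1)) => w 0) ∘ ⇑R := by
        funext z
        have h1 : ⟪u, z⟫ = ⟪R u, R z⟫ := (R.inner_map_map u z).symm
        rw [Function.comp_apply, h1, hRu, hE₀, EuclideanSpace.inner_single_left]
        simp
      have hev : Measurable (fun w : EuclideanSpace ℝ (Fin (m + 1)) => w 0) :=
        (measurable_pi_apply 0).comp (WithLp.measurable_ofLp 2 _)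
      rw [hcomp, ← Measure.map_map hev (R.continuous.measurable),
        gaussianE_map_isometry R, gaussianE_eq_pi hσ,
        Measure.map_map hev (MeasurableEquiv.measurable _)]
      have : ((fun w : EuclideanSpace ℝ (Fin (m + 1)) => w 0) ∘
          (MeasurableEquiv.toLp 2 (Fin (m + 1) → ℝ))) =
          Function.eval (0 : Fin (m + 1)) := rfl
      haveI hPi : ∀ _ : Fin (m + 1), IsProbabilityMeasure (gaussianReal 0 (⟨σ ^ 2, sq_nonneg σ⟩ : NNReal)) :=
        fun _ => instIsProbabilityMeasureGaussianReal 0 _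
      rw [this, @map_eval_pi' _ _ _ _ _ hPi]
end gaussE2

section halfspace
open Real
variable {n : ℕ} {σ : ℝ}

lemma gaussianE_halfspace (hσ : 0 < σ) (u : EuclideanSpace ℝ (Fin n)) (hu : ‖u‖ = 1) (c : ℝ) :
    gaussianE n 0 σ {w | c ≤ ⟪u, w⟫} = gaussianReal 0 1 (Set.Ici (c / σ)) := by
  have hmi : Measurable fun w : EuclideanSpace ℝ (Fin n) => ⟪u, w⟫ :=
    (continuous_const.inner continuous_id).measurable
  have h1 : {w : EuclideanSpace ℝ (Fin n) | c ≤ ⟪u, w⟫} =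
      (fun w : EuclideanSpace ℝ (Fin n) => ⟪u, w⟫) ⁻¹' (Set.Ici c) := rfl
  rw [h1, ← Measure.map_apply hmi measurableSet_Ici, gaussianE_map_inner hσ u hu]
  have hscale : gaussianReal 0 (⟨σ ^ 2, sq_nonneg σ⟩ : NNReal) =
      Measure.map (fun t : ℝ => σ * t) (gaussianReal 0 1) := by
    rw [gaussianReal_map_const_mul σ, mul_zero, mul_one]
    rfl
  rw [hscale, Measure.map_apply (measurable_const_mul σ) measurableSet_Ici]
  congr 1
  ext t
  simp only [Set.mem_preimage, Set.mem_Ici]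
  rw [mul_comm, ← div_le_iff₀ hσ]

lemma gaussianReal_map_neg : Measure.map (fun t : ℝ => -t) (gaussianReal 0 1) =
    gaussianReal 0 1 := by
  have h : (fun t : ℝ => -t) = (fun t : ℝ => (-1 : ℝ) * t) := funext fun t => by ring
  rw [h, gaussianReal_map_const_mul]
  norm_num

instance : NullSingletonClass (gaussianReal 0 1) :=
  ⟨fun a => gaussianReal_absolutelyContinuous 0 one_ne_zero (volume_singleton)⟩

lemma gaussQ_Ici_neg (a : ℝ) : ((gaussianReal 0 1) (Set.Ici (-a))).toReal = 1 - gaussQ a := by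
  have hset : (fun t : ℝ => -t) ⁻¹' Set.Ici (-a) = Set.Iic a := by
    ext t
    simp only [Set.mem_preimage, Set.mem_Ici, Set.mem_Iic]
    constructor <;> intro h <;> linarith
  have h1 : gaussianReal 0 1 (Set.Ici (-a)) = gaussianReal 0 1 (Set.Iic a) :=
    calc gaussianReal 0 1 (Set.Ici (-a))
        = (Measure.map (fun t : ℝ => -t) (gaussianReal 0 1)) (Set.Ici (-a)) := by
          rw [_root_.gaussianReal_map_neg]
      _ = gaussianReal 0 1 ((fun t : ℝ => -t) ⁻¹' Set.Ici (-a)) :=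
          Measure.map_apply measurable_neg measurableSet_Ici
      _ = gaussianReal 0 1 (Set.Iic a) := by rw [hset]
  have hIoi : gaussianReal 0 1 (Set.Ioi a) = gaussianReal 0 1 (Set.Ici a) :=
    measure_congr (MeasureTheory.Ioi_ae_eq_Ici (μ := gaussianReal 0 1))
  have hsum : gaussianReal 0 1 (Set.Iic a) + gaussianReal 0 1 (Set.Ioi a) = 1 := by
    rw [← Set.compl_Iic]
    rw [measure_add_measure_compl measurableSet_Iic, measure_univ]
  have hfin1 : gaussianReal 0 1 (Set.Iic a) ≠ ⊤ := measure_ne_top _ _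
  have hfin2 : gaussianReal 0 1 (Set.Ioi a) ≠ ⊤ := measure_ne_top _ _
  have := congrArg ENNReal.toReal hsum
  rw [ENNReal.toReal_add hfin1 hfin2, ENNReal.toReal_one] at this
  rw [h1, gaussQ, ← hIoi]
  linarith

lemma gaussQ_mono {a b : ℝ} (h : a ≤ b) : gaussQ b ≤ gaussQ a :=
  ENNReal.toReal_mono (measure_ne_top _ _) (measure_mono (Set.Ici_subset_Ici.mpr h))
end halfspace

section key
open Real
variable {n : ℕ} {σ : ℝ}

lemma gaussianE_sub_le (hσ : 0 < σ) {x y : EuclideanSpace ℝ (Fin n)}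
    (hxy : x ≠ y) {A : Set (EuclideanSpace ℝ (Fin n))} (hA : MeasurableSet A) :
    ((gaussianE n x σ) A).toReal - ((gaussianE n y σ) A).toReal ≤
      1 - 2 * gaussQ (‖x - y‖ / (2 * σ)) := by
  haveI hPx := isProbabilityMeasure_gaussianE hσ x
  haveI hPy := isProbabilityMeasure_gaussianE hσ y
  set r : ℝ := ‖x - y‖ with hrdef
  have hr : 0 < r := norm_pos_iff.mpr (sub_ne_zero.mpr hxy)
  set u : EuclideanSpace ℝ (Fin n) := (‖x - y‖ : ℝ)⁻¹ • (x - y) with hudef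
  have hu : ‖u‖ = 1 := by
    rw [hudef]
    exact norm_smul_inv_norm (𝕜 := ℝ) (sub_ne_zero.mpr hxy)
  have hxyeq : x - y = r • u := by
    rw [hudef, smul_smul, mul_inv_cancel₀ hr.ne', one_smul]
  set H : Set (EuclideanSpace ℝ (Fin n)) :=
    {z | ‖x‖ ^ 2 - ‖y‖ ^ 2 ≤ 2 * ⟪x - y, z⟫} with hHdef
  have hHmeas : MeasurableSet H := by
    have hc : Continuous fun z : EuclideanSpace ℝ (Fin n) => 2 * ⟪x - y, z⟫ :=
      continuous_const.mul (continuous_const.inner continuous_id)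
    exact measurableSet_le measurable_const hc.measurable
  have h2σ : (0 : ℝ) < 2 * σ ^ 2 := by positivity
  have hc0 : (0 : ℝ) < (2 * π * σ ^ 2) ^ (-(n : ℝ) / 2) :=
    Real.rpow_pos_of_pos (by positivity) _
  -- density comparison
  have hcmp : ∀ z : EuclideanSpace ℝ (Fin n), z ∈ H ↔
      (2 * π * σ ^ 2) ^ (-(n : ℝ) / 2) * Real.exp (-‖z - y‖ ^ 2 / (2 * σ ^ 2)) ≤
      (2 * π * σ ^ 2) ^ (-(n : ℝ) / 2) * Real.exp (-‖z - x‖ ^ 2 / (2 * σ ^ 2)) := by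
    intro z
    rw [mul_le_mul_iff_right₀ hc0, Real.exp_le_exp, div_le_div_iff_of_pos_right h2σ, neg_le_neg_iff,
      norm_sub_sq_real z x, norm_sub_sq_real z y, hHdef]
    simp only [Set.mem_setOf_eq, inner_sub_left]
    rw [real_inner_comm z x, real_inner_comm z y]
    constructor <;> intro h <;> linarith
  -- measure comparison on subsets of H / Hᶜ
  have cmpH : ∀ S : Set (EuclideanSpace ℝ (Fin n)), MeasurableSet S → S ⊆ H →
      gaussianE n y σ S ≤ gaussianE n x σ S := by
    intro S hS hSH
    rw [gaussianE, gaussianE, withDensity_apply _ hS, withDensity_apply _ hS]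
    exact setLIntegral_mono (measurable_gdens x) fun z hz =>
      ENNReal.ofReal_le_ofReal ((hcmp z).mp (hSH hz))
  have cmpHc : ∀ S : Set (EuclideanSpace ℝ (Fin n)), MeasurableSet S → S ⊆ Hᶜ →
      gaussianE n x σ S ≤ gaussianE n y σ S := by
    intro S hS hSH
    rw [gaussianE, gaussianE, withDensity_apply _ hS, withDensity_apply _ hS]
    refine setLIntegral_mono (measurable_gdens y) fun z hz => ?_
    exact ENNReal.ofReal_le_ofReal (le_of_not_ge fun hcon => hSH hz ((hcmp z).mpr hcon))
  -- abbreviations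
  set μx := gaussianE n x σ
  set μy := gaussianE n y σ
  -- decomposition identities (in ℝ)
  have tadd : ∀ (μ : Measure (EuclideanSpace ℝ (Fin n))) (_ : IsFiniteMeasure μ)
      (S T : Set (EuclideanSpace ℝ (Fin n))), MeasurableSet T →
      (μ (S ∩ T)).toReal + (μ (S \ T)).toReal = (μ S).toReal := by
    intro μ hμ S T hT
    rw [← ENNReal.toReal_add (measure_ne_top _ _) (measure_ne_top _ _),
      measure_inter_add_diff S hT]
  have dxA := tadd μx inferInstance A H hHmeas
  have dyA := tadd μy inferInstance A H hHmeas
  have dxH := tadd μx inferInstance H A hA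
  have dyH := tadd μy inferInstance H A hA
  rw [Set.inter_comm H A] at dxH dyH
  have h1 : (μx (A \ H)).toReal ≤ (μy (A \ H)).toReal :=
    ENNReal.toReal_mono (measure_ne_top _ _)
      (cmpHc _ (hA.diff hHmeas) fun z hz => hz.2)
  have h2 : (μy (H \ A)).toReal ≤ (μx (H \ A)).toReal :=
    ENNReal.toReal_mono (measure_ne_top _ _)
      (cmpH _ (hHmeas.diff hA) fun z hz => hz.1)
  have step1 : (μx A).toReal - (μy A).toReal ≤ (μx H).toReal - (μy H).toReal := by
    linarith
  -- compute μx H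
  have hpre_x : (fun w : EuclideanSpace ℝ (Fin n) => x + w) ⁻¹' H =
      {w : EuclideanSpace ℝ (Fin n) | -(r / 2) ≤ ⟪u, w⟫} := by
    ext w
    simp only [Set.mem_preimage, hHdef, Set.mem_setOf_eq]
    have ea : ⟪x - y, x⟫ = ‖x‖ ^ 2 - ⟪x, y⟫ := by
      rw [inner_sub_left, real_inner_self_eq_norm_sq, real_inner_comm y x]
    have eb : ⟪x - y, w⟫ = r * ⟪u, w⟫ := by rw [hxyeq, real_inner_smul_left]
    have e2 : r ^ 2 = ‖x‖ ^ 2 - 2 * ⟪x, y⟫ + ‖y‖ ^ 2 := by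
      rw [hrdef, norm_sub_sq_real]
    rw [inner_add_right, ea, eb]
    have h2r : (0 : ℝ) < 2 * r := by linarith
    constructor
    · intro h
      have h' : -(r ^ 2) ≤ ⟪u, w⟫ * (2 * r) := by linarith
      have := (div_le_iff₀ h2r).mpr h'
      have hq : -(r ^ 2) / (2 * r) = -(r / 2) := by
        field_simp
      linarith [hq ▸ this]
    · intro h
      have := mul_le_mul_of_nonneg_left h (le_of_lt h2r)
      have hq : (2 * r) * (-(r / 2)) = -(r ^ 2) := by ring
      rw [hq] at this
      linarith
  have hpre_y : (fun w : EuclideanSpace ℝ (Fin n) => y + w) ⁻¹' H =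
      {w : EuclideanSpace ℝ (Fin n) | r / 2 ≤ ⟪u, w⟫} := by
    ext w
    simp only [Set.mem_preimage, hHdef, Set.mem_setOf_eq]
    have ea : ⟪x - y, y⟫ = ⟪x, y⟫ - ‖y‖ ^ 2 := by
      rw [inner_sub_left, real_inner_self_eq_norm_sq]
    have eb : ⟪x - y, w⟫ = r * ⟪u, w⟫ := by rw [hxyeq, real_inner_smul_left]
    have e2 : r ^ 2 = ‖x‖ ^ 2 - 2 * ⟪x, y⟫ + ‖y‖ ^ 2 := by
      rw [hrdef, norm_sub_sq_real]
    rw [inner_add_right, ea, eb]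
    have h2r : (0 : ℝ) < 2 * r := by linarith
    constructor
    · intro h
      have h' : r ^ 2 ≤ ⟪u, w⟫ * (2 * r) := by linarith
      have := (div_le_iff₀ h2r).mpr h'
      have hq : r ^ 2 / (2 * r) = r / 2 := by
        field_simp
      linarith [hq ▸ this]
    · intro h
      have := mul_le_mul_of_nonneg_left h (le_of_lt h2r)
      have hq : (2 * r) * (r / 2) = r ^ 2 := by ring
      rw [hq] at this
      linarith
  have hμxH : (μx H).toReal = 1 - gaussQ (r / (2 * σ)) := by
    have : μx H = gaussianReal 0 1 (Set.Ici (-(r / 2) / σ)) := by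
      rw [show μx = gaussianE n x σ from rfl, ← gaussianE_translate x,
        Measure.map_apply (measurable_const_add x) hHmeas, hpre_x,
        gaussianE_halfspace hσ u hu (-(r / 2))]
    rw [this]
    have hq : -(r / 2) / σ = -(r / (2 * σ)) := by
      field_simp
    rw [hq, gaussQ_Ici_neg]
  have hμyH : (μy H).toReal = gaussQ (r / (2 * σ)) := by
    have : μy H = gaussianReal 0 1 (Set.Ici ((r / 2) / σ)) := by
      rw [show μy = gaussianE n y σ from rfl, ← gaussianE_translate y,
        Measure.map_apply (measurable_const_add y) hHmeas, hpre_y,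
        gaussianE_halfspace hσ u hu (r / 2)]
    rw [this, gaussQ]
    congr 2
    rw [div_div]
  rw [hμxH, hμyH] at step1
  linarith
end key

section main
variable {n : ℕ} {σ B : ℝ}

lemma one_sided (hσ : 0 < σ)
    {Ω : Type*} [MeasurableSpace Ω] (P : Measure Ω) [IsProbabilityMeasure P]
    (X Y N : Ω → EuclideanSpace ℝ (Fin n))
    (hX : Measurable X) (hY : Measurable Y) (hN : Measurable N)
    (hbound : ∀ᵐ ω ∂P, ‖X ω - Y ω‖ ≤ B)
    (hNlaw : Measure.map N P = gaussianE n 0 σ)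
    (hindep : ProbabilityTheory.IndepFun (fun ω => (X ω, Y ω)) N P)
    {A : Set (EuclideanSpace ℝ (Fin n))} (hA : MeasurableSet A) :
    ((Measure.map (fun ω => X ω + N ω) P) A).toReal -
      ((Measure.map (fun ω => Y ω + N ω) P) A).toReal ≤
      (1 - 2 * gaussQ (B / (2 * σ))) * (P {ω | X ω ≠ Y ω}).toReal := by
  haveI hP0 : IsProbabilityMeasure (gaussianE n 0 σ) := isProbabilityMeasure_gaussianE_zero hσ
  set C : ℝ := 1 - 2 * gaussQ (B / (2 * σ)) with hC
  set κ : Measure (EuclideanSpace ℝ (Fin n) × EuclideanSpace ℝ (Fin n)) :=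
    Measure.map (fun ω => (X ω, Y ω)) P with hκ
  haveI : IsProbabilityMeasure κ := Measure.isProbabilityMeasure_map (hX.prodMk hY).aemeasurable
  have hprod : Measure.map (fun ω => ((X ω, Y ω), N ω)) P = κ.prod (gaussianE n 0 σ) := by
    rw [hκ, ← hNlaw]
    exact (ProbabilityTheory.indepFun_iff_map_prod_eq_prod_map_map
      (hX.prodMk hY).aemeasurable hN.aemeasurable).mp hindep
  have measaddX : Measurable (fun p : (EuclideanSpace ℝ (Fin n) × EuclideanSpace ℝ (Fin n)) ×
      EuclideanSpace ℝ (Fin n) => p.1.1 + p.2) :=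
    (measurable_fst.comp measurable_fst).add measurable_snd
  have measaddY : Measurable (fun p : (EuclideanSpace ℝ (Fin n) × EuclideanSpace ℝ (Fin n)) ×
      EuclideanSpace ℝ (Fin n) => p.1.2 + p.2) :=
    (measurable_snd.comp measurable_fst).add measurable_snd
  have hmapX : Measure.map (fun ω => X ω + N ω) P =
      Measure.map (fun p : (EuclideanSpace ℝ (Fin n) × EuclideanSpace ℝ (Fin n)) ×
        EuclideanSpace ℝ (Fin n) => p.1.1 + p.2) (κ.prod (gaussianE n 0 σ)) := by
    rw [← hprod, Measure.map_map measaddX ((hX.prodMk hY).prodMk hN)]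
    rfl
  have hmapY : Measure.map (fun ω => Y ω + N ω) P =
      Measure.map (fun p : (EuclideanSpace ℝ (Fin n) × EuclideanSpace ℝ (Fin n)) ×
        EuclideanSpace ℝ (Fin n) => p.1.2 + p.2) (κ.prod (gaussianE n 0 σ)) := by
    rw [← hprod, Measure.map_map measaddY ((hX.prodMk hY).prodMk hN)]
    rfl
  have hval : ∀ x : EuclideanSpace ℝ (Fin n),
      (gaussianE n 0 σ) {w | x + w ∈ A} = gaussianE n x σ A := by
    intro x
    rw [← gaussianE_translate x, Measure.map_apply (measurable_const_add x) hA]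
    rfl
  have hXA : (Measure.map (fun ω => X ω + N ω) P) A = ∫⁻ q, gaussianE n q.1 σ A ∂κ := by
    rw [hmapX, Measure.map_apply measaddX hA, Measure.prod_apply (measaddX hA)]
    exact lintegral_congr fun q => hval q.1
  have hYA : (Measure.map (fun ω => Y ω + N ω) P) A = ∫⁻ q, gaussianE n q.2 σ A ∂κ := by
    rw [hmapY, Measure.map_apply measaddY hA, Measure.prod_apply (measaddY hA)]
    exact lintegral_congr fun q => hval q.2
  -- measurability of the two kernels
  have hSX : MeasurableSet {p : EuclideanSpace ℝ (Fin n) × EuclideanSpace ℝ (Fin n) |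
      p.1 + p.2 ∈ A} := (measurable_fst.add measurable_snd) hA
  have hFmeas : Measurable fun q : EuclideanSpace ℝ (Fin n) × EuclideanSpace ℝ (Fin n) =>
      gaussianE n q.1 σ A := by
    have h0 := (measurable_measure_prodMk_left (ν := gaussianE n 0 σ) hSX).comp
      (measurable_fst : Measurable fun q : EuclideanSpace ℝ (Fin n) ×
        EuclideanSpace ℝ (Fin n) => q.1)
    simp only [Function.comp_def] at h0
    have : (fun q : EuclideanSpace ℝ (Fin n) × EuclideanSpace ℝ (Fin n) =>
        gaussianE n q.1 σ A) = fun q => (gaussianE n 0 σ) (Prod.mk q.1 ⁻¹' {p :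
          EuclideanSpace ℝ (Fin n) × EuclideanSpace ℝ (Fin n) | p.1 + p.2 ∈ A}) :=
      funext fun q => (hval q.1).symm
    rw [this]
    exact h0
  have hGmeas : Measurable fun q : EuclideanSpace ℝ (Fin n) × EuclideanSpace ℝ (Fin n) =>
      gaussianE n q.2 σ A := by
    have h0 := (measurable_measure_prodMk_left (ν := gaussianE n 0 σ) hSX).comp
      (measurable_snd : Measurable fun q : EuclideanSpace ℝ (Fin n) ×
        EuclideanSpace ℝ (Fin n) => q.2)
    simp only [Function.comp_def] at h0
    have : (fun q : EuclideanSpace ℝ (Fin n) × EuclideanSpace ℝ (Fin n) =>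
        gaussianE n q.2 σ A) = fun q => (gaussianE n 0 σ) (Prod.mk q.2 ⁻¹' {p :
          EuclideanSpace ℝ (Fin n) × EuclideanSpace ℝ (Fin n) | p.1 + p.2 ∈ A}) :=
      funext fun q => (hval q.2).symm
    rw [this]
    exact h0
  have hF1 : ∀ q : EuclideanSpace ℝ (Fin n) × EuclideanSpace ℝ (Fin n),
      gaussianE n q.1 σ A ≤ 1 := fun q => by
    haveI := isProbabilityMeasure_gaussianE hσ q.1
    exact prob_le_one
  have hG1 : ∀ q : EuclideanSpace ℝ (Fin n) × EuclideanSpace ℝ (Fin n),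
      gaussianE n q.2 σ A ≤ 1 := fun q => by
    haveI := isProbabilityMeasure_gaussianE hσ q.2
    exact prob_le_one
  have hXr : ((Measure.map (fun ω => X ω + N ω) P) A).toReal =
      ∫ q, (gaussianE n q.1 σ A).toReal ∂κ := by
    rw [hXA, ← integral_toReal hFmeas.aemeasurable
      (Filter.Eventually.of_forall fun q => lt_of_le_of_lt (hF1 q) ENNReal.one_lt_top)]
  have hYr : ((Measure.map (fun ω => Y ω + N ω) P) A).toReal =
      ∫ q, (gaussianE n q.2 σ A).toReal ∂κ := by
    rw [hYA, ← integral_toReal hGmeas.aemeasurable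
      (Filter.Eventually.of_forall fun q => lt_of_le_of_lt (hG1 q) ENNReal.one_lt_top)]
  have hFint : Integrable (fun q => (gaussianE n q.1 σ A).toReal) κ := by
    refine Integrable.mono' (integrable_const 1) hFmeas.ennreal_toReal.aestronglyMeasurable
      (Filter.Eventually.of_forall fun q => ?_)
    rw [Real.norm_eq_abs, abs_of_nonneg ENNReal.toReal_nonneg]
    simpa using ENNReal.toReal_mono ENNReal.one_ne_top (hF1 q)
  have hGint : Integrable (fun q => (gaussianE n q.2 σ A).toReal) κ := by
    refine Integrable.mono' (integrable_const 1) hGmeas.ennreal_toReal.aestronglyMeasurable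
      (Filter.Eventually.of_forall fun q => ?_)
    rw [Real.norm_eq_abs, abs_of_nonneg ENNReal.toReal_nonneg]
    simpa using ENNReal.toReal_mono ENNReal.one_ne_top (hG1 q)
  set D : Set (EuclideanSpace ℝ (Fin n) × EuclideanSpace ℝ (Fin n)) :=
    {q | q.1 ≠ q.2} with hD
  have hDmeas : MeasurableSet D := by
    have : D = ((fun q : EuclideanSpace ℝ (Fin n) × EuclideanSpace ℝ (Fin n) =>
        q.1 - q.2) ⁻¹' {0})ᶜ := by
      ext q
      simp [hD, sub_eq_zero]
    rw [this]
    exact ((measurable_fst.sub measurable_snd) (measurableSet_singleton 0)).compl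
  have hae : ∀ᵐ q ∂κ, ‖q.1 - q.2‖ ≤ B := by
    rw [hκ]
    have hs : MeasurableSet {q : EuclideanSpace ℝ (Fin n) × EuclideanSpace ℝ (Fin n) |
        ‖q.1 - q.2‖ ≤ B} := measurableSet_le (measurable_fst.sub measurable_snd).norm
      measurable_const
    exact (MeasureTheory.ae_map_iff (hX.prodMk hY).aemeasurable hs).mpr hbound
  have hptwise : ∀ᵐ q ∂κ, (gaussianE n q.1 σ A).toReal - (gaussianE n q.2 σ A).toReal ≤
      D.indicator (fun _ => C) q := by
    filter_upwards [hae] with q hq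
    by_cases hqe : q.1 = q.2
    · rw [Set.indicator_of_notMem (by simp [hD, hqe])]
      rw [hqe]
      simp
    · rw [Set.indicator_of_mem (by simpa [hD] using hqe)]
      have h1 := gaussianE_sub_le (n := n) hσ hqe hA
      have h2 : gaussQ (B / (2 * σ)) ≤ gaussQ (‖q.1 - q.2‖ / (2 * σ)) := by
        exact gaussQ_mono
          ((div_le_div_iff_of_pos_right (show (0:ℝ) < 2 * σ by linarith)).mpr hq)
      rw [hC]
      linarith
  have hκD : κ D = P {ω | X ω ≠ Y ω} := by
    rw [hκ, Measure.map_apply (hX.prodMk hY) hDmeas]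
    rfl
  calc ((Measure.map (fun ω => X ω + N ω) P) A).toReal -
      ((Measure.map (fun ω => Y ω + N ω) P) A).toReal
      = ∫ q, ((gaussianE n q.1 σ A).toReal - (gaussianE n q.2 σ A).toReal) ∂κ := by
        rw [hXr, hYr, ← integral_sub hFint hGint]
    _ ≤ ∫ q, D.indicator (fun _ => C) q ∂κ :=
        integral_mono_ae (hFint.sub hGint) ((integrable_const C).indicator hDmeas) hptwise
    _ = (κ D).toReal • C := integral_indicator_const C hDmeas
    _ = C * (P {ω | X ω ≠ Y ω}).toReal := by rw [hκD, smul_eq_mul, mul_comm]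
end main

/-- Adding independent Gaussian noise to a coupled pair `(X, Y)` with `‖X - Y‖ ≤ B`
a.s. contracts the total variation distance between the laws:
`TV(X+N, Y+N) ≤ (1 - 2Q(B/(2σ))) ℙ(X ≠ Y)`. -/
theorem tv_noise_contraction (n : ℕ) (σ B : ℝ) (hσ : 0 < σ) (hB : 0 ≤ B)
    {Ω : Type*} [MeasurableSpace Ω] (P : Measure Ω) [IsProbabilityMeasure P]
    (X Y N : Ω → EuclideanSpace ℝ (Fin n))
    (hX : Measurable X) (hY : Measurable Y) (hN : Measurable N)
    (hbound : ∀ᵐ ω ∂P, ‖X ω - Y ω‖ ≤ B)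
    (hNlaw : Measure.map N P = gaussianE n 0 σ)
    (hindep : ProbabilityTheory.IndepFun (fun ω => (X ω, Y ω)) N P) :
    tvDist (Measure.map (fun ω => X ω + N ω) P) (Measure.map (fun ω => Y ω + N ω) P) ≤
      (1 - 2 * gaussQ (B / (2 * σ))) * (P {ω | X ω ≠ Y ω}).toReal := by

  have hind' : ProbabilityTheory.IndepFun (fun ω => (Y ω, X ω)) N P := by
    have h := hindep.comp measurable_swap measurable_id
    exact h
  have hbound' : ∀ᵐ ω ∂P, ‖Y ω - X ω‖ ≤ B := hbound.mono fun ω h => by rwa [norm_sub_rev]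
  have hsets : {ω | Y ω ≠ X ω} = {ω | X ω ≠ Y ω} := by
    ext ω
    exact ne_comm
  refine ciSup_le fun A => ?_
  rw [abs_sub_le_iff]
  refine ⟨one_sided hσ P X Y N hX hY hN hbound hNlaw hindep A.2, ?_⟩
  have h := one_sided hσ P Y X N hY hX hN hbound' hNlaw hind' A.2
  rwa [hsets] at h
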